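/- Let n be a positive integer and let f : {0,1}^n → {−1, 1} be any Boolean function. Then f can be realized by a polynomial kernel perceptron of degree n: there exist real numbers α_z for z ∈ {0,1}^n and b ∈ ℝ such that for every x ∈ {0,1}^n, f(x) = σ( Σ_{z ∈ {0,1}^n} α_z f(z) ⟨z, x⟩^n + b ), where σ(t) = 1 for t ≥ 0 and σ(t) = −1 for t < 0. -/

import Mathlib

open Finset


/-- The activation function: `σ(t) = 1` for `t ≥ 0` and `σ(t) = −1` for `t < 0`. -/
noncomputable def perceptronSign (t : ℝ) : ℝ := if 0 ≤ t then 1 else -1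

/-- The embedding of a Boolean vector `z ∈ {0,1}^n` into `ℝ^n`. -/
def boolVec {n : ℕ} (z : Fin n → Bool) : Fin n → ℝ := fun k => if z k then 1 else 0

namespace PerceptronAux

variable {n : ℕ}

def tset (v : Fin n → Bool) : Finset (Fin n) := Finset.univ.filter (fun k => v k = true)

def ofSet (T : Finset (Fin n)) : Fin n → Bool := fun k => decide (k ∈ T)

lemma tset_ofSet (T : Finset (Fin n)) : tset (ofSet T) = T := by
  ext k; simp [tset, ofSet]

lemma ofSet_tset (v : Fin n → Bool) : ofSet (tset v) = v := by
  funext k; simp [tset, ofSet]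

lemma kernel_eq (z x : Fin n → Bool) :
    ∑ k, boolVec z k * boolVec x k = ((tset z ∩ tset x).card : ℝ) := by
  have h : ∀ k, boolVec z k * boolVec x k = if k ∈ tset z ∩ tset x then (1:ℝ) else 0 := by
    intro k
    by_cases hz : z k <;> by_cases hx : x k <;> simp [boolVec, tset, hz, hx]
  rw [Finset.sum_congr rfl (fun k _ => h k), Finset.sum_ite_mem]
  simp

def surjCard (n : ℕ) (S : Finset (Fin n)) : ℕ :=
  (Finset.univ.filter (fun g : Fin n → Fin n => Finset.image g Finset.univ = S)).card

lemma sum_surjCard (T : Finset (Fin n)) :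
    ∑ S ∈ T.powerset, surjCard n S = T.card ^ n := by
  classical
  have h1 : (Fintype.piFinset (fun _ : Fin n => T)).card = T.card ^ n := by
    simp [Fintype.card_piFinset]
  rw [← h1]
  rw [Finset.card_eq_sum_card_fiberwise
    (f := fun g : Fin n → Fin n => Finset.image g Finset.univ) (t := T.powerset)
    (fun g hg => by
      simp only [Finset.mem_coe, Fintype.mem_piFinset] at hg
      simp only [Finset.mem_coe, Finset.mem_powerset]
      intro a ha
      simp only [Finset.mem_image, Finset.mem_univ, true_and] at ha
      obtain ⟨i, rfl⟩ := ha
      exact hg i)]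
  apply Finset.sum_congr rfl
  intro S hS
  rw [Finset.mem_powerset] at hS
  unfold surjCard
  congr 1
  ext g
  simp only [Finset.mem_filter, Fintype.mem_piFinset, Finset.mem_univ, true_and]
  have himp : Finset.image g Finset.univ = S → ∀ i, g i ∈ T := by
    intro h i
    apply hS
    rw [← h]
    exact Finset.mem_image_of_mem g (Finset.mem_univ i)
  tauto

lemma surjCard_pos {S : Finset (Fin n)} (hS : S.Nonempty) : 0 < surjCard n S := by
  obtain ⟨s0, hs0⟩ := hS
  apply Finset.card_pos.mpr
  refine ⟨fun i => if i ∈ S then i else s0, ?_⟩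
  simp only [Finset.mem_filter, Finset.mem_univ, true_and]
  ext a
  simp only [Finset.mem_image, Finset.mem_univ, true_and]
  constructor
  · rintro ⟨i, rfl⟩; by_cases h : i ∈ S <;> simp [h, hs0]
  · intro ha; exact ⟨a, by simp [ha]⟩

lemma surjCard_empty (hn : 0 < n) : surjCard n (∅ : Finset (Fin n)) = 0 := by
  unfold surjCard
  rw [Finset.card_eq_zero]
  ext g
  simp only [Finset.mem_filter, Finset.mem_univ, true_and, Finset.notMem_empty, iff_false]
  intro h
  have : g ⟨0, hn⟩ ∈ Finset.image g Finset.univ := Finset.mem_image_of_mem g (Finset.mem_univ _)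
  rw [h] at this
  exact absurd this (Finset.notMem_empty _)

noncomputable def dcoef (n : ℕ) (S : Finset (Fin n)) : ℝ :=
  (surjCard n S : ℝ) + (if S = ∅ then 1 else 0)

lemma dcoef_pos (S : Finset (Fin n)) : 0 < dcoef n S := by
  rcases S.eq_empty_or_nonempty with rfl | h
  · simp [dcoef]; positivity
  · have := surjCard_pos h
    simp [dcoef]
    positivity

noncomputable def indR (S : Finset (Fin n)) (v : Fin n → Bool) : ℝ := if S ⊆ tset v then 1 else 0

lemma expansion (z x : Fin n → Bool) :
    ((tset z ∩ tset x).card : ℝ) ^ n + 1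
      = ∑ S ∈ (Finset.univ : Finset (Fin n)).powerset, dcoef n S * indR S z * indR S x := by
  have key : ∀ S : Finset (Fin n), dcoef n S * indR S z * indR S x
      = if S ∈ (tset z ∩ tset x).powerset then dcoef n S else 0 := by
    intro S
    unfold indR
    simp only [Finset.mem_powerset, Finset.subset_inter_iff]
    by_cases hz : S ⊆ tset z <;> by_cases hx : S ⊆ tset x <;>
      simp [hz, hx]
  rw [Finset.sum_congr rfl (fun S _ => key S), Finset.sum_ite_mem]
  have hsub : (Finset.univ : Finset (Fin n)).powerset ∩ (tset z ∩ tset x).powerset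
      = (tset z ∩ tset x).powerset := by
    apply Finset.inter_eq_right.mpr
    intro S hS
    simp [Finset.mem_powerset]
  rw [hsub]
  unfold dcoef
  rw [Finset.sum_add_distrib]
  have h2 : ∑ S ∈ (tset z ∩ tset x).powerset, (if S = ∅ then (1:ℝ) else 0) = 1 := by
    rw [Finset.sum_ite_eq' (tset z ∩ tset x).powerset (∅ : Finset (Fin n)) (fun _ => (1:ℝ))]
    rw [if_pos (Finset.empty_mem_powerset _)]
  rw [h2]
  have h3 : ∑ S ∈ (tset z ∩ tset x).powerset, (surjCard n S : ℝ)
      = ((tset z ∩ tset x).card : ℝ) ^ n := by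
    rw [← Nat.cast_sum]
    rw [sum_surjCard]
    push_cast
    ring
  rw [h3]

end PerceptronAux


open PerceptronAux

/-- Every Boolean function `f : {0,1}^n → {−1,1}` can be realized by a polynomial
kernel perceptron of degree `n`: there are reals `α_z` (`z ∈ {0,1}^n`) and `b ∈ ℝ` such that
`f(x) = σ( Σ_z α_z f(z) ⟨z,x⟩^n + b )` for all `x ∈ {0,1}^n`. -/
theorem boolean_function_realized_by_degree_n_perceptron (n : ℕ) (hn : 0 < n)
    (f : (Fin n → Bool) → ℝ) (hf : ∀ x, f x = 1 ∨ f x = -1) :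
    ∃ α : (Fin n → Bool) → ℝ, ∃ b : ℝ, ∀ x : Fin n → Bool,
      f x = perceptronSign
        (∑ z : Fin n → Bool, α z * f z * (∑ k, boolVec z k * boolVec x k) ^ n + b) := by
  classical
  set A : (Fin n → Bool) → (Fin n → Bool) → ℝ :=
    fun z x => ((tset z ∩ tset x).card : ℝ) ^ n + 1 with hA
  set Tmap : ((Fin n → Bool) → ℝ) →ₗ[ℝ] ((Fin n → Bool) → ℝ) :=
    { toFun := fun β x => ∑ z, β z * A z x
      map_add' := by
        intro β γ; funext x; simp [add_mul, Finset.sum_add_distrib]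
      map_smul' := by
        intro c β; funext x; simp [Finset.mul_sum, mul_assoc] } with hT
  have hinj : Function.Injective Tmap := by
    rw [injective_iff_map_eq_zero]
    intro β hβ
    have hβ' : ∀ x, ∑ z, β z * A z x = 0 := fun x => congrFun hβ x
    set P : Finset (Finset (Fin n)) := (Finset.univ : Finset (Fin n)).powerset with hP
    set Y : Finset (Fin n) → ℝ := fun S => ∑ z, β z * indR S z with hYdef
    -- quadratic form vanishes
    have hquad : ∑ S ∈ P, dcoef n S * (Y S) ^ 2 = 0 := by
      have step1 : ∑ S ∈ P, dcoef n S * (Y S) ^ 2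
          = ∑ S ∈ P, ∑ z, ∑ x, (β z * β x) * (dcoef n S * indR S z * indR S x) := by
        refine Finset.sum_congr rfl (fun S _ => ?_)
        show dcoef n S * (∑ z, β z * indR S z) ^ 2 = _
        rw [pow_two, Finset.sum_mul_sum, Finset.mul_sum]
        refine Finset.sum_congr rfl (fun z _ => ?_)
        rw [Finset.mul_sum]
        exact Finset.sum_congr rfl (fun x _ => by ring)
      have step2 : ∑ S ∈ P, ∑ z, ∑ x, (β z * β x) * (dcoef n S * indR S z * indR S x)
          = ∑ z, ∑ x, (β z * β x) * A z x := by
        rw [Finset.sum_comm]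
        refine Finset.sum_congr rfl (fun z _ => ?_)
        rw [Finset.sum_comm]
        refine Finset.sum_congr rfl (fun x _ => ?_)
        rw [← Finset.mul_sum]
        congr 1
        exact (expansion z x).symm
      have step3 : ∑ z, ∑ x, (β z * β x) * A z x
          = ∑ x, β x * (∑ z, β z * A z x) := by
        rw [Finset.sum_comm]
        refine Finset.sum_congr rfl (fun x _ => ?_)
        rw [Finset.mul_sum]
        exact Finset.sum_congr rfl (fun z _ => by ring)
      rw [step1, step2, step3]
      simp [hβ']
    have hY0 : ∀ S : Finset (Fin n), Y S = 0 := by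
      intro S
      have hmem : S ∈ P := by
        rw [hP, Finset.mem_powerset]; exact Finset.subset_univ S
      have hterm : dcoef n S * (Y S) ^ 2 = 0 := by
        have hnn : ∀ S ∈ P, 0 ≤ dcoef n S * (Y S) ^ 2 :=
          fun S _ => mul_nonneg (dcoef_pos S).le (sq_nonneg _)
        exact (Finset.sum_eq_zero_iff_of_nonneg hnn).mp hquad S hmem
      have := (mul_eq_zero.mp hterm).resolve_left (dcoef_pos S).ne'
      exact pow_eq_zero_iff (by norm_num) |>.mp this
    -- Möbius inversion
    set γ : Finset (Fin n) → ℝ := fun T => β (ofSet T) with hγdef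
    have hYfil : ∀ S : Finset (Fin n),
        Y S = ∑ T ∈ Finset.univ.filter (fun T => S ⊆ T), γ T := by
      intro S
      let e : Finset (Fin n) ≃ (Fin n → Bool) :=
        ⟨ofSet, tset, tset_ofSet, ofSet_tset⟩
      show (∑ z, β z * indR S z) = _
      rw [← Fintype.sum_equiv e (fun T => β (e T) * indR S (e T)) (fun z => β z * indR S z)
        (fun T => rfl)]
      have : ∀ T : Finset (Fin n), indR S (e T) = if S ⊆ T then (1:ℝ) else 0 := by
        intro T
        show indR S (ofSet T) = _
        rw [indR, tset_ofSet]
      rw [Finset.sum_congr rfl (fun T _ => by rw [this T])]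
      have h4 : ∀ T : Finset (Fin n), β (e T) * (if S ⊆ T then (1:ℝ) else 0)
          = if S ⊆ T then γ T else 0 := by
        intro T
        by_cases h : S ⊆ T
        · rw [if_pos h, if_pos h, mul_one]; rfl
        · rw [if_neg h, if_neg h, mul_zero]
      rw [Finset.sum_congr rfl (fun T _ => h4 T), Finset.sum_filter]
    have hγ0 : ∀ m : ℕ, ∀ T : Finset (Fin n), Tᶜ.card = m → γ T = 0 := by
      intro m
      induction m using Nat.strong_induction_on with
      | _ m ih =>
        intro T hT
        have hsplit : Finset.univ.filter (fun U => T ⊆ U)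
            = insert T (Finset.univ.filter (fun U => T ⊂ U)) := by
          ext U
          simp only [Finset.mem_filter, Finset.mem_univ, true_and, Finset.mem_insert]
          constructor
          · intro h
            rcases eq_or_ne U T with rfl | hne
            · exact Or.inl rfl
            · exact Or.inr ⟨h, fun hUT => hne (Finset.Subset.antisymm hUT h)⟩
          · rintro (rfl | h)
            · exact Finset.Subset.refl _
            · exact h.1
        have hnotmem : T ∉ Finset.univ.filter (fun U => T ⊂ U) := by
          simp only [Finset.mem_filter, Finset.mem_univ, true_and]
          exact fun h => (Finset.ssubset_iff_subset_ne.mp h).2 rfl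
        have hrest : ∑ U ∈ Finset.univ.filter (fun U => T ⊂ U), γ U = 0 := by
          refine Finset.sum_eq_zero (fun U hU => ?_)
          simp only [Finset.mem_filter, Finset.mem_univ, true_and] at hU
          have hcard : U.card ≤ n := by
            simpa using Finset.card_le_card (Finset.subset_univ U)
          have hlt : T.card < U.card := Finset.card_lt_card hU
          have h1 : Uᶜ.card = n - U.card := by simp [Finset.card_compl]
          have h2 : Tᶜ.card = n - T.card := by simp [Finset.card_compl]
          have hltm : Uᶜ.card < m := by omega
          exact ih _ hltm U rfl
        have := hY0 T
        rw [hYfil T, hsplit, Finset.sum_insert hnotmem, hrest] at this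
        linarith
    have hβ0 : β = 0 := by
      funext v
      have := hγ0 (tset v)ᶜ.card (tset v) rfl
      rw [hγdef] at this
      simpa [ofSet_tset] using this
    exact hβ0
  have hsurj : Function.Surjective Tmap := LinearMap.injective_iff_surjective.mp hinj
  obtain ⟨β, hβ⟩ := hsurj f
  refine ⟨fun z => β z * f z, ∑ z, β z, ?_⟩
  intro x
  have hfx : ∑ z, (β z * f z) * f z * (∑ k, boolVec z k * boolVec x k) ^ n + ∑ z, β z
      = f x := by
    have h1 : ∀ z, (β z * f z) * f z * (∑ k, boolVec z k * boolVec x k) ^ n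
        = β z * ((tset z ∩ tset x).card : ℝ) ^ n := by
      intro z
      rw [kernel_eq]
      rcases hf z with h | h <;> rw [h] <;> ring
    rw [Finset.sum_congr rfl (fun z _ => h1 z)]
    rw [← Finset.sum_add_distrib]
    have h2 : ∀ z : Fin n → Bool,
        β z * ((tset z ∩ tset x).card : ℝ) ^ n + β z = β z * A z x := by
      intro z; rw [hA]; ring
    rw [Finset.sum_congr rfl (fun z _ => h2 z)]
    exact congrFun hβ x
  rw [hfx]
  rcases hf x with h | h <;> rw [h] <;> simp [perceptronSign] <;> norm_num
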